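/- Fix real numbers a < b and fix (α_0, β_0) with β_0 > 0. For every ρ ∈ (0, 1) there exists α_ρ ∈ ℝ such that g(α_ρ, ρβ_0) = g(α_0, β_0), where g(α, β) = ∫_a^b (1/√(2πβ)) exp(−(x−α)²/(2β)) dx. Consequently, for the binary quantizer with regions I^{(1)} = (a,b) and I^{(2)} = ℝ \ (a,b), every parameter point (α_0, β_0) has uncountably many observationally equivalent parameter points. -/

import Mathlib

open Real

private noncomputable def stdPdf : ℝ → ℝ := fun u => (Real.sqrt (2 * π))⁻¹ * Real.exp (-u ^ 2 / 2)

private noncomputable def stdPrim : ℝ → ℝ := fun t => ∫ u in (0:ℝ)..t, stdPdf u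

private lemma stdPdf_cont : Continuous stdPdf := by
  unfold stdPdf; fun_prop

private lemma stdPdf_nonneg (u : ℝ) : 0 ≤ stdPdf u := by
  unfold stdPdf; positivity

private lemma stdPdf_intble (s t : ℝ) : IntervalIntegrable stdPdf MeasureTheory.volume s t :=
  stdPdf_cont.intervalIntegrable s t

private lemma stdPrim_cont : Continuous stdPrim :=
  intervalIntegral.continuous_primitive (fun s t => stdPdf_intble s t) 0

private lemma stdPrim_sub (s t : ℝ) : (∫ u in s..t, stdPdf u) = stdPrim t - stdPrim s :=
  (intervalIntegral.integral_interval_sub_left (stdPdf_intble 0 t) (stdPdf_intble 0 s)).symm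

private lemma stdPrim_mono : Monotone stdPrim := by
  intro s t hst
  have h := stdPrim_sub s t
  have hnn : 0 ≤ ∫ u in s..t, stdPdf u :=
    intervalIntegral.integral_nonneg hst (fun u _ => stdPdf_nonneg u)
  linarith

set_option maxHeartbeats 1000000 in
theorem every_point_nonidentifiable (a b : ℝ) (hab : a < b)
    (α₀ β₀ : ℝ) (hβ₀ : 0 < β₀)
    (g : ℝ → ℝ → ℝ)
    (hg : ∀ α β, g α β =
      ∫ x in a..b, (Real.sqrt (2 * π * β))⁻¹ * Real.exp (-(x - α) ^ 2 / (2 * β))) :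
    (∀ ρ ∈ Set.Ioo (0 : ℝ) 1, ∃ αρ : ℝ, g αρ (ρ * β₀) = g α₀ β₀) ∧
    ¬ Set.Countable {p : ℝ × ℝ | 0 < p.2 ∧ g p.1 p.2 = g α₀ β₀ ∧ p ≠ (α₀, β₀)} := by
  -- Key reduction: g α β = stdPrim ((b-α)/√β) - stdPrim ((a-α)/√β) for β > 0
  have key : ∀ α β : ℝ, 0 < β →
      g α β = stdPrim ((b - α) / Real.sqrt β) - stdPrim ((a - α) / Real.sqrt β) := by
    intro α β hβ
    have hsβ : 0 < Real.sqrt β := Real.sqrt_pos.mpr hβ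
    have h2π : (0:ℝ) ≤ 2 * π := by positivity
    rw [hg]
    have hpt : ∀ x : ℝ, (Real.sqrt (2 * π * β))⁻¹ * Real.exp (-(x - α) ^ 2 / (2 * β))
        = (Real.sqrt β)⁻¹ * stdPdf ((x - α) / Real.sqrt β) := by
      intro x
      unfold stdPdf
      have h1 : Real.sqrt (2 * π * β) = Real.sqrt (2 * π) * Real.sqrt β :=
        Real.sqrt_mul h2π β
      have h2 : ((x - α) / Real.sqrt β) ^ 2 = (x - α) ^ 2 / β := by
        rw [div_pow, Real.sq_sqrt hβ.le]
      rw [h1, h2, mul_inv]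
      have h3 : -((x - α) ^ 2 / β) / 2 = -(x - α) ^ 2 / (2 * β) := by ring
      rw [h3]; ring
    calc (∫ x in a..b, (Real.sqrt (2 * π * β))⁻¹ * Real.exp (-(x - α) ^ 2 / (2 * β)))
        = ∫ x in a..b, (Real.sqrt β)⁻¹ * stdPdf ((x - α) / Real.sqrt β) := by
          exact intervalIntegral.integral_congr (fun x _ => hpt x)
      _ = (Real.sqrt β)⁻¹ * ∫ x in a..b, stdPdf ((x - α) / Real.sqrt β) := by
          exact intervalIntegral.integral_const_mul _ _
      _ = (Real.sqrt β)⁻¹ * ∫ y in a - α..b - α, stdPdf (y / Real.sqrt β) := by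
          rw [intervalIntegral.integral_comp_sub_right (fun y => stdPdf (y / Real.sqrt β)) α]
      _ = (Real.sqrt β)⁻¹ * (Real.sqrt β •
            ∫ u in (a - α) / Real.sqrt β..(b - α) / Real.sqrt β, stdPdf u) := by
          rw [intervalIntegral.integral_comp_div (fun u => stdPdf u) hsβ.ne']
      _ = ∫ u in (a - α) / Real.sqrt β..(b - α) / Real.sqrt β, stdPdf u := by
          rw [smul_eq_mul, ← mul_assoc, inv_mul_cancel₀ hsβ.ne', one_mul]
      _ = _ := stdPrim_sub _ _
  have hc₀ : 0 < Real.sqrt β₀ := Real.sqrt_pos.mpr hβ₀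
  set c₀ : ℝ := Real.sqrt β₀ with hc₀def
  set s₀ : ℝ := (a - α₀) / c₀ with hs₀def
  set t₀ : ℝ := (b - α₀) / c₀ with ht₀def
  have hT : g α₀ β₀ = stdPrim t₀ - stdPrim s₀ := key α₀ β₀ hβ₀
  have hst₀ : s₀ < t₀ := by
    exact div_lt_div_of_pos_right (by linarith) hc₀
  have hTpos : 0 < stdPrim t₀ - stdPrim s₀ := by
    rw [← stdPrim_sub]
    exact intervalIntegral.intervalIntegral_pos_of_pos (stdPdf_intble s₀ t₀)
      (fun u => by unfold stdPdf; positivity) hst₀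
  set T : ℝ := stdPrim t₀ - stdPrim s₀ with hTdef
  -- Part 1
  have part1 : ∀ ρ ∈ Set.Ioo (0 : ℝ) 1, ∃ αρ : ℝ, g αρ (ρ * β₀) = g α₀ β₀ := by
    intro ρ hρ
    obtain ⟨hρ0, hρ1⟩ := hρ
    have hβ' : 0 < ρ * β₀ := mul_pos hρ0 hβ₀
    set c : ℝ := Real.sqrt (ρ * β₀) with hcdef
    have hc : 0 < c := Real.sqrt_pos.mpr hβ'
    have hcc₀ : c ≤ c₀ := Real.sqrt_le_sqrt (by nlinarith)
    set h : ℝ → ℝ := fun α => stdPrim ((b - α) / c) - stdPrim ((a - α) / c) with hhdef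
    have hgh : ∀ α, g α (ρ * β₀) = h α := fun α => key α (ρ * β₀) hβ'
    have hhcont : Continuous h := by
      apply Continuous.sub <;> exact stdPrim_cont.comp (by fun_prop)
    -- upper point
    set αs : ℝ := a - s₀ * c with hαsdef
    have hαs1 : (a - αs) / c = s₀ := by
      rw [hαsdef]; field_simp; ring
    have hαs2 : t₀ ≤ (b - αs) / c := by
      have hba : (b - a) / c₀ ≤ (b - a) / c := by
        apply div_le_div_of_nonneg_left (by linarith) hc hcc₀
      have e1 : (b - αs) / c = s₀ + (b - a) / c := by
        rw [hαsdef]; field_simp; ring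
      have e2 : t₀ = s₀ + (b - a) / c₀ := by
        rw [ht₀def, hs₀def]; ring
      linarith
    have hupper : T ≤ h αs := by
      have := stdPrim_mono hαs2
      simp only [hhdef, hαs1]
      linarith
    -- lower point
    set L : ℝ := (b - a) / c with hLdef
    have hL : 0 < L := div_pos (by linarith) hc
    set t₁ : ℝ := min (-2) (Real.log (T / (2 * L))) with ht₁def
    have ht₁2 : t₁ ≤ -2 := min_le_left _ _
    set α₁ : ℝ := b - t₁ * c with hα₁def
    have hb1 : (b - α₁) / c = t₁ := by rw [hα₁def]; field_simp; ring
    have ha1 : (a - α₁) / c = t₁ - L := by rw [hα₁def, hLdef]; field_simp; ring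
    have hmono_bd : ∀ u ∈ Set.Icc (t₁ - L) t₁, stdPdf u ≤ stdPdf t₁ := by
      intro u hu
      unfold stdPdf
      have hu1 : u ≤ t₁ := hu.2
      have ht₁0 : t₁ ≤ 0 := by linarith
      have hsq : t₁ ^ 2 ≤ u ^ 2 := by nlinarith
      have : Real.exp (-u ^ 2 / 2) ≤ Real.exp (-t₁ ^ 2 / 2) :=
        Real.exp_le_exp.mpr (by linarith)
      exact mul_le_mul_of_nonneg_left this (by positivity)
    have hlow1 : h α₁ ≤ L * stdPdf t₁ := by
      have hint : (∫ u in (t₁ - L)..t₁, stdPdf u) ≤ ∫ _ in (t₁ - L)..t₁, stdPdf t₁ :=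
        intervalIntegral.integral_mono_on (by linarith) (stdPdf_intble _ _)
          (intervalIntegrable_const) hmono_bd
      rw [intervalIntegral.integral_const, smul_eq_mul] at hint
      have : h α₁ = ∫ u in (t₁ - L)..t₁, stdPdf u := by
        simp only [hhdef, hb1, ha1]
        exact (stdPrim_sub _ _).symm
      rw [this]
      calc (∫ u in (t₁ - L)..t₁, stdPdf u) ≤ (t₁ - (t₁ - L)) * stdPdf t₁ := hint
        _ = L * stdPdf t₁ := by ring
    have hpdf_small : stdPdf t₁ ≤ T / (2 * L) := by
      unfold stdPdf
      have h1 : (Real.sqrt (2 * π))⁻¹ ≤ 1 := by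
        rw [inv_le_one_iff₀]
        right
        rw [show (1:ℝ) = Real.sqrt 1 by simp]
        exact Real.sqrt_le_sqrt (by nlinarith [Real.pi_gt_three])
      have h2 : Real.exp (-t₁ ^ 2 / 2) ≤ Real.exp t₁ :=
        Real.exp_le_exp.mpr (by nlinarith)
      have h3 : Real.exp t₁ ≤ T / (2 * L) := by
        have := Real.exp_le_exp.mpr (min_le_right (-2) (Real.log (T / (2 * L))))
        rwa [Real.exp_log (by positivity)] at this
      have hx : 0 < Real.exp (-t₁ ^ 2 / 2) := Real.exp_pos _
      nlinarith [Real.exp_pos t₁, Real.sqrt_nonneg (2 * π), inv_nonneg.mpr (Real.sqrt_nonneg (2 * π))]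
    have hlower : h α₁ < T := by
      have : L * stdPdf t₁ ≤ L * (T / (2 * L)) :=
        mul_le_mul_of_nonneg_left hpdf_small hL.le
      have heq : L * (T / (2 * L)) = T / 2 := by field_simp
      linarith
    -- IVT
    have hIVT : Set.uIcc (h α₁) (h αs) ⊆ h '' Set.uIcc α₁ αs :=
      intermediate_value_uIcc hhcont.continuousOn
    have hTmem : T ∈ Set.uIcc (h α₁) (h αs) := Set.mem_uIcc.mpr (Or.inl ⟨hlower.le, hupper⟩)
    obtain ⟨αρ, _, hαρ⟩ := hIVT hTmem
    exact ⟨αρ, by rw [hgh, hαρ, hT]⟩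
  refine ⟨part1, ?_⟩
  -- Part 2
  intro hS
  have H1 : ∀ ρ : ℝ, ∃ α : ℝ, ρ ∈ Set.Ioo (0:ℝ) 1 → g α (ρ * β₀) = g α₀ β₀ := by
    intro ρ
    by_cases hρ : ρ ∈ Set.Ioo (0:ℝ) 1
    · obtain ⟨α, hα⟩ := part1 ρ hρ
      exact ⟨α, fun _ => hα⟩
    · exact ⟨0, fun h => absurd h hρ⟩
  choose A hA using H1
  set Fm : ℝ → ℝ × ℝ := fun ρ => (A ρ, ρ * β₀) with hFmdef
  have hFinj : Function.Injective Fm := by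
    intro ρ ρ' h
    have := congrArg Prod.snd h
    simp only [hFmdef] at this
    exact mul_right_cancel₀ hβ₀.ne' this
  have hsub : Set.Ioo (0:ℝ) 1 ⊆ Fm ⁻¹' {p : ℝ × ℝ | 0 < p.2 ∧ g p.1 p.2 = g α₀ β₀ ∧ p ≠ (α₀, β₀)} := by
    intro ρ hρ
    refine ⟨mul_pos hρ.1 hβ₀, hA ρ hρ, ?_⟩
    intro hEq
    have h2 := congrArg Prod.snd hEq
    simp only [hFmdef] at h2
    have : ρ = 1 := mul_right_cancel₀ hβ₀.ne' (by rw [h2, one_mul])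
    linarith [hρ.2]
  have hcnt : (Set.Ioo (0:ℝ) 1).Countable := (hS.preimage hFinj).mono hsub
  have := hcnt.measure_zero MeasureTheory.volume
  rw [Real.volume_Ioo] at this
  norm_num at this
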